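/- Let d_0, d_1, …, d_n be a nonnegative sequence of real numbers such that the subsequence of nonzero terms is increasing (i.e., whenever i < j with d_i ≠ 0 and d_j ≠ 0, one has d_i ≤ d_j). Then the polynomial Σ_{i=0}^n d_i (1+x)^i, expanded in powers of x, has a unimodal coefficient sequence. -/

import Mathlib

open Polynomial Finset

def PolyUnimodal (p : Polynomial ℝ) : Prop :=
  ∃ m : ℕ, (∀ i, i < m → p.coeff i ≤ p.coeff (i + 1)) ∧
    (∀ i, m ≤ i → p.coeff (i + 1) ≤ p.coeff i)

/-- Hockey-stick: `∑ i < M, C(i,r) = C(M, r+1)`. -/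
lemma sum_range_choose_aux (M r : ℕ) :
    ∑ i ∈ Finset.range M, i.choose r = M.choose (r + 1) := by
  induction M with
  | zero => simp
  | succ M ih => rw [Finset.sum_range_succ, ih, Nat.choose_succ_succ' M r, Nat.add_comm]

/-- `C(i, k+1) ≤ C(i, k)` when `i ≤ 2k+1`. -/
lemma choose_succ_le_aux {i k : ℕ} (h : i ≤ 2 * k + 1) :
    i.choose (k + 1) ≤ i.choose k := by
  have h1 : i.choose (k + 1) * (k + 1) = i.choose k * (i - k) := Nat.choose_succ_right_eq i k
  have h2 : i - k ≤ k + 1 := by omega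
  have h3 : i.choose (k + 1) * (k + 1) ≤ i.choose k * (k + 1) := by
    calc i.choose (k + 1) * (k + 1) = i.choose k * (i - k) := h1
    _ ≤ i.choose k * (k + 1) := Nat.mul_le_mul_left _ h2
  exact Nat.le_of_mul_le_mul_right h3 (Nat.succ_pos k)

/-- `C(i, k) ≤ C(i, k+1)` when `2k+1 ≤ i`. -/
lemma choose_le_succ_aux {i k : ℕ} (h : 2 * k + 1 ≤ i) :
    i.choose k ≤ i.choose (k + 1) := by
  rcases Nat.lt_or_ge i (2 * k + 2) with hi | hi
  · have : i = 2 * k + 1 := by omega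
    subst this
    have hk : k ≤ 2 * k + 1 := by omega
    have := Nat.choose_symm hk
    have he : 2 * k + 1 - k = k + 1 := by omega
    rw [he] at this
    omega
  · exact Nat.choose_le_succ_of_lt_half_left (by omega)

/-- Pascal with predecessor. -/
lemma pascal_pred (M r : ℕ) (hr : 0 < r) :
    (M + 1).choose r = M.choose (r - 1) + M.choose r := by
  obtain ⟨s, rfl⟩ : ∃ s, r = s + 1 := ⟨r - 1, by omega⟩
  simp [Nat.choose_succ_succ']

/-- Key binomial inequality. -/
lemma key_binom (k : ℕ) : ∀ N, 2 * k + 2 ≤ N →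
    (2 * k + 1).choose (k + 1) + N.choose k ≤ (2 * k + 1).choose (k + 2) + N.choose (k + 1) := by
  intro N
  induction N with
  | zero => omega
  | succ N ih =>
    intro hN
    rcases Nat.lt_or_ge N (2 * k + 2) with hbase | hstep
    · -- N + 1 = 2k + 2
      have hNe : N = 2 * k + 1 := by omega
      subst hNe
      have hp : (2 * k + 1 + 1).choose (k + 1)
          = (2 * k + 1).choose k + (2 * k + 1).choose (k + 1) :=
        Nat.choose_succ_succ' (2 * k + 1) k
      rcases Nat.eq_zero_or_pos k with hk0 | hkpos
      · subst hk0; decide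
      · obtain ⟨r, rfl⟩ : ∃ r, k = r + 1 := ⟨k - 1, by omega⟩
        have hpk : (2 * (r + 1) + 1 + 1).choose (r + 1)
            = (2 * (r + 1) + 1).choose r + (2 * (r + 1) + 1).choose (r + 1) :=
          Nat.choose_succ_succ' (2 * (r + 1) + 1) r
        have hsym : (2 * (r + 1) + 1).choose (r + 1 + 2) = (2 * (r + 1) + 1).choose r := by
          have hle : r + 1 + 2 ≤ 2 * (r + 1) + 1 := by omega
          have h := Nat.choose_symm hle
          rw [show 2 * (r + 1) + 1 - (r + 1 + 2) = r from by omega] at h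
          exact h.symm
        omega
    · -- inductive step
      have IH := ih hstep
      have hp1 : (N + 1).choose (k + 1) = N.choose k + N.choose (k + 1) :=
        Nat.choose_succ_succ' N k
      have h2 : (N + 1).choose k ≤ 2 * N.choose k := by
        rcases Nat.eq_zero_or_pos k with hk0 | hkpos
        · subst hk0; simp
        · obtain ⟨r, rfl⟩ : ∃ r, k = r + 1 := ⟨k - 1, by omega⟩
          have hpk : (N + 1).choose (r + 1) = N.choose r + N.choose (r + 1) :=
            Nat.choose_succ_succ' N r
          have hmono : N.choose r ≤ N.choose (r + 1) :=
            Nat.choose_le_succ_of_lt_half_left (by omega)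
          omega
      omega

theorem stmt6 (n : ℕ) (d : ℕ → ℝ)
    (hd_nonneg : ∀ i ≤ n, 0 ≤ d i)
    (hd_incr : ∀ i j, i < j → j ≤ n → d i ≠ 0 → d j ≠ 0 → d i ≤ d j) :
    PolyUnimodal (∑ i ∈ Finset.range (n + 1), C (d i) * (1 + X) ^ i) := by
  have hc : ∀ k, (∑ i ∈ Finset.range (n + 1), C (d i) * (1 + X) ^ i).coeff k
      = ∑ i ∈ Finset.range (n + 1), d i * (i.choose k : ℝ) := by
    intro k
    rw [Polynomial.finset_sum_coeff]
    refine Finset.sum_congr rfl fun i _ => ?_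
    rw [Polynomial.coeff_C_mul, Polynomial.coeff_one_add_X_pow]
  set c : ℕ → ℝ := fun k => ∑ i ∈ Finset.range (n + 1), d i * (i.choose k : ℝ) with hcdef
  -- trivial case: all d i = 0
  by_cases hall : ∀ i ∈ Finset.range (n + 1), d i = 0
  · refine ⟨0, fun i hi => by omega, fun i _ => ?_⟩
    rw [hc, hc]
    have h0 : ∀ k, c k = 0 := fun k =>
      Finset.sum_eq_zero fun j hj => by rw [hall j hj, zero_mul]
    simp only [hcdef] at h0
    rw [h0, h0]
  · push_neg at hall
    set S := (Finset.range (n + 1)).filter (fun i => d i ≠ 0) with hS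
    have hSne : S.Nonempty := by
      obtain ⟨i, hi, hdi⟩ := hall
      exact ⟨i, Finset.mem_filter.mpr ⟨hi, hdi⟩⟩
    set N := S.max' hSne with hNdef
    have hNmem : N ∈ S := S.max'_mem hSne
    have hNn : N ≤ n := by
      have := (Finset.mem_filter.mp hNmem).1
      simpa [Finset.mem_range, Nat.lt_succ_iff] using this
    have hdN : d N ≠ 0 := (Finset.mem_filter.mp hNmem).2
    have hdNpos : 0 < d N := lt_of_le_of_ne (hd_nonneg N hNn) (Ne.symm hdN)
    have hmax : ∀ i ≤ n, d i ≠ 0 → i ≤ N := by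
      intro i hi hdi
      exact S.le_max' i (Finset.mem_filter.mpr ⟨Finset.mem_range.mpr (by omega), hdi⟩)
    refine ⟨N / 2, ?_, ?_⟩
    · -- increasing part: k < N/2
      intro k hk
      rw [hc, hc]
      have hkN : 2 * k + 2 ≤ N := by omega
      -- define a i = choose i (k+1) - choose i k (real)
      set a : ℕ → ℝ := fun i => (i.choose (k + 1) : ℝ) - (i.choose k : ℝ) with hadef
      have hsum_nonneg :
          0 ≤ ∑ i ∈ Finset.range (n + 1), d i * a i := by
        have hG : ∀ i ∈ Finset.range (n + 1),
            (if i < 2 * k + 1 then d N * a i else if i = N then d N * a i else 0) ≤ d i * a i := by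
          intro i hi
          rw [Finset.mem_range] at hi
          by_cases h1 : i < 2 * k + 1
          · simp only [h1, if_true]
            have hai : a i ≤ 0 := by
              have := choose_succ_le_aux (i := i) (k := k) (by omega)
              simp only [hadef]
              have : (i.choose (k + 1) : ℝ) ≤ (i.choose k : ℝ) := by exact_mod_cast this
              linarith
            by_cases hdi : d i = 0
            · rw [hdi, zero_mul]
              exact mul_nonpos_of_nonneg_of_nonpos hdNpos.le hai
            · have hiN : i < N := by omega
              have hle : d i ≤ d N := hd_incr i N hiN hNn hdi hdN
              exact mul_le_mul_of_nonpos_right hle hai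
          · simp only [h1, if_false]
            have hai : 0 ≤ a i := by
              have := choose_le_succ_aux (i := i) (k := k) (by omega)
              simp only [hadef]
              have : (i.choose k : ℝ) ≤ (i.choose (k + 1) : ℝ) := by exact_mod_cast this
              linarith
            by_cases h2 : i = N
            · simp only [h2, if_true, le_refl]
            · simp only [h2, if_false]
              exact mul_nonneg (hd_nonneg i (by omega)) hai
        have hGsum : (∑ i ∈ Finset.range (n + 1),
            (if i < 2 * k + 1 then d N * a i else if i = N then d N * a i else 0))
            = d N * ((∑ i ∈ Finset.range (2 * k + 1), a i) + a N) := by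
          rw [Finset.range_eq_Ico,
            ← Finset.sum_Ico_consecutive _ (Nat.zero_le (2 * k + 1)) (by omega : 2 * k + 1 ≤ n + 1)]
          have e1 : (∑ i ∈ Finset.Ico 0 (2 * k + 1),
              (if i < 2 * k + 1 then d N * a i else if i = N then d N * a i else 0))
              = d N * ∑ i ∈ Finset.Ico 0 (2 * k + 1), a i := by
            rw [Finset.mul_sum]
            refine Finset.sum_congr rfl fun i hi => ?_
            rw [Finset.mem_Ico] at hi
            simp [hi.2]
          have e2 : (∑ i ∈ Finset.Ico (2 * k + 1) (n + 1),
              (if i < 2 * k + 1 then d N * a i else if i = N then d N * a i else 0))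
              = d N * a N := by
            have : ∀ i ∈ Finset.Ico (2 * k + 1) (n + 1),
                (if i < 2 * k + 1 then d N * a i else if i = N then d N * a i else 0)
                = if i = N then d N * a i else 0 := by
              intro i hi
              rw [Finset.mem_Ico] at hi
              simp [Nat.not_lt.mpr hi.1]
            rw [Finset.sum_congr rfl this, Finset.sum_ite_eq']
            have hNmem' : N ∈ Finset.Ico (2 * k + 1) (n + 1) :=
              Finset.mem_Ico.mpr ⟨by omega, by omega⟩
            rw [if_pos hNmem']
          rw [e1, e2, mul_add, Finset.range_eq_Ico]
        have hbracket : 0 ≤ (∑ i ∈ Finset.range (2 * k + 1), a i) + a N := by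
          have hs1 : (∑ i ∈ Finset.range (2 * k + 1), a i)
              = ((2 * k + 1).choose (k + 2) : ℝ) - ((2 * k + 1).choose (k + 1) : ℝ) := by
            simp only [hadef]
            rw [Finset.sum_sub_distrib]
            rw [← Nat.cast_sum, ← Nat.cast_sum, sum_range_choose_aux, sum_range_choose_aux]
          have hkey := key_binom k N hkN
          have hkey' : ((2 * k + 1).choose (k + 1) : ℝ) + (N.choose k : ℝ)
              ≤ ((2 * k + 1).choose (k + 2) : ℝ) + (N.choose (k + 1) : ℝ) := by
            exact_mod_cast hkey
          simp only [hadef]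
          rw [hs1]
          linarith
        calc (0 : ℝ) ≤ d N * ((∑ i ∈ Finset.range (2 * k + 1), a i) + a N) :=
              mul_nonneg hdNpos.le hbracket
          _ = ∑ i ∈ Finset.range (n + 1),
              (if i < 2 * k + 1 then d N * a i else if i = N then d N * a i else 0) := hGsum.symm
          _ ≤ ∑ i ∈ Finset.range (n + 1), d i * a i := Finset.sum_le_sum hG
      have hsplit : (∑ i ∈ Finset.range (n + 1), d i * (i.choose (k + 1) : ℝ))
          - (∑ i ∈ Finset.range (n + 1), d i * (i.choose k : ℝ))
          = ∑ i ∈ Finset.range (n + 1), d i * a i := by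
        rw [← Finset.sum_sub_distrib]
        refine Finset.sum_congr rfl fun i _ => ?_
        simp [hadef, mul_sub]
      linarith [hsum_nonneg, hsplit]
    · -- decreasing part: k ≥ N/2
      intro k hk
      rw [hc, hc]
      refine Finset.sum_le_sum fun i hi => ?_
      rw [Finset.mem_range] at hi
      by_cases hdi : d i = 0
      · rw [hdi, zero_mul, zero_mul]
      · have hiN : i ≤ N := hmax i (by omega) hdi
        have : i.choose (k + 1) ≤ i.choose k := choose_succ_le_aux (by omega)
        have hcast : (i.choose (k + 1) : ℝ) ≤ (i.choose k : ℝ) := by exact_mod_cast this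
        exact mul_le_mul_of_nonneg_left hcast (hd_nonneg i (by omega))
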